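/- Entropy integral bound: the function u ↦ log^{1/2}(1 + 1/u) is integrable on (0, R] for every R > 0, and ∫_0^R log^{1/2}(1 + 1/u) du ≤ R·log^{1/2}(1 + 1/R) + log(1+R)/log^{1/2}(1 + 1/R) for R < 1. -/

import Mathlib

open MeasureTheory Real

-- log(1+x) ≤ 2√x for x ≥ 0
lemma aux_log_le_two_sqrt {x : ℝ} (hx : 0 ≤ x) : Real.log (1 + x) ≤ 2 * Real.sqrt x := by
  have hs : 0 ≤ Real.sqrt x := Real.sqrt_nonneg x
  have hsq : Real.sqrt x ^ 2 = x := Real.sq_sqrt hx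
  have h1 : (1:ℝ) + x ≤ (1 + Real.sqrt x) ^ 2 := by nlinarith
  calc Real.log (1 + x) ≤ Real.log ((1 + Real.sqrt x) ^ 2) :=
        Real.log_le_log (by positivity) h1
    _ = 2 * Real.log (1 + Real.sqrt x) := by
        rw [Real.log_pow]; push_cast; ring
    _ ≤ 2 * Real.sqrt x := by
        have := Real.log_le_sub_one_of_pos (show (0:ℝ) < 1 + Real.sqrt x by positivity)
        linarith

lemma aux_log_nonneg {u : ℝ} (hu : 0 < u) : 0 ≤ Real.log (1 + 1 / u) :=
  Real.log_nonneg (by nlinarith [one_div_pos.2 hu])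

lemma aux_contOn {R : ℝ} : ContinuousOn (fun u : ℝ => Real.log (1 + 1 / u)) (Set.Ioc 0 R) := by
  apply ContinuousOn.log
  · exact continuousOn_const.add (continuousOn_const.div continuousOn_id
      (fun x hx => ne_of_gt hx.1))
  · intro x hx
    have : 0 < 1 / x := one_div_pos.2 hx.1
    nlinarith

lemma aux_rpow_int {R : ℝ} (hR : 0 < R) :
    IntegrableOn (fun u : ℝ => u ^ (-(1/2) : ℝ)) (Set.Ioc 0 R) := by
  have := intervalIntegral.intervalIntegrable_rpow' (a := 0) (b := R)
    (r := (-(1/2) : ℝ)) (by norm_num)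
  rwa [intervalIntegrable_iff_integrableOn_Ioc_of_le hR.le] at this

lemma aux_int_log {R : ℝ} (hR : 0 < R) :
    IntegrableOn (fun u : ℝ => Real.log (1 + 1 / u)) (Set.Ioc 0 R) := by
  have hmeas : AEStronglyMeasurable (fun u : ℝ => Real.log (1 + 1 / u))
      (volume.restrict (Set.Ioc 0 R)) :=
    aux_contOn.aestronglyMeasurable measurableSet_Ioc
  refine ((aux_rpow_int hR).const_mul 2).mono hmeas ?_
  rw [ae_restrict_iff' measurableSet_Ioc]
  filter_upwards with u hu
  have hu0 : 0 < u := hu.1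
  have h1 : Real.log (1 + 1 / u) ≤ 2 * Real.sqrt (1 / u) :=
    aux_log_le_two_sqrt (by positivity)
  have h2 : Real.sqrt (1 / u) = u ^ (-(1/2) : ℝ) := by
    rw [one_div, Real.sqrt_eq_rpow, ← Real.rpow_neg_one u, ← Real.rpow_mul hu0.le]
    norm_num
  rw [Real.norm_eq_abs, Real.norm_eq_abs, abs_of_nonneg (aux_log_nonneg hu0),
    abs_of_nonneg (by positivity)]
  rw [h2] at h1; exact h1

lemma aux_int_sqrt {R : ℝ} (hR : 0 < R) :
    IntegrableOn (fun u : ℝ => Real.sqrt (Real.log (1 + 1 / u))) (Set.Ioc 0 R) := by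
  have hmeas : AEStronglyMeasurable (fun u : ℝ => Real.sqrt (Real.log (1 + 1 / u)))
      (volume.restrict (Set.Ioc 0 R)) :=
    aux_contOn.sqrt.aestronglyMeasurable measurableSet_Ioc
  refine Integrable.mono (aux_rpow_int hR) hmeas ?_
  rw [ae_restrict_iff' measurableSet_Ioc]
  filter_upwards with u hu
  have hu0 : 0 < u := hu.1
  have hlog : Real.log (1 + 1 / u) ≤ 1 / u := by
    have := Real.log_le_sub_one_of_pos (show (0:ℝ) < 1 + 1/u by positivity)
    linarith
  have h2 : Real.sqrt (1 / u) = u ^ (-(1/2) : ℝ) := by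
    rw [one_div, Real.sqrt_eq_rpow, ← Real.rpow_neg_one u, ← Real.rpow_mul hu0.le]
    norm_num
  rw [Real.norm_eq_abs, Real.norm_eq_abs, abs_of_nonneg (Real.sqrt_nonneg _),
    abs_of_nonneg (by positivity), ← h2]
  exact Real.sqrt_le_sqrt hlog

-- antiderivative
noncomputable def auxF (u : ℝ) : ℝ := u * Real.log (1 + 1 / u) + Real.log (1 + u)

lemma auxF_deriv {u : ℝ} (hu : 0 < u) :
    HasDerivAt auxF (Real.log (1 + 1 / u)) u := by
  have hne : u ≠ 0 := hu.ne'
  have h1 : HasDerivAt (fun x : ℝ => 1 + 1 / x) (-(u ^ 2)⁻¹) u := by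
    simpa [one_div] using (hasDerivAt_inv hne).const_add 1
  have hpos : (0:ℝ) < 1 + 1 / u := by positivity
  have h2 : HasDerivAt (fun x : ℝ => Real.log (1 + 1 / x))
      (-(u ^ 2)⁻¹ / (1 + 1 / u)) u := h1.log hpos.ne'
  have h3 : HasDerivAt (fun x : ℝ => x * Real.log (1 + 1 / x))
      (1 * Real.log (1 + 1 / u) + u * (-(u ^ 2)⁻¹ / (1 + 1 / u))) u :=
    (hasDerivAt_id u).mul h2
  have h4 : HasDerivAt (fun x : ℝ => Real.log (1 + x)) (1 / (1 + u)) u := by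
    have := ((hasDerivAt_id u).const_add 1).log (show (1:ℝ) + u ≠ 0 by positivity)
    simpa using this
  have := h3.add h4
  refine (show HasDerivAt auxF _ u from this).congr_deriv ?_
  have hden : u * (1 + 1/u) = u + 1 := by field_simp
  have h1u : (1:ℝ) + u ≠ 0 := by positivity
  rw [show u * (-(u ^ 2)⁻¹ / (1 + 1 / u)) = -(1 / (1 + u)) by
    rw [show (1:ℝ) + 1 / u = (u + 1) / u by field_simp]
    field_simp
    ring]
  ring

lemma auxF_zero : auxF 0 = 0 := by simp [auxF]

lemma auxF_cont {R : ℝ} (hR : 0 < R) : ContinuousOn auxF (Set.Icc 0 R) := by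
  intro x hx
  rcases eq_or_lt_of_le hx.1 with h0 | h0
  · -- x = 0
    have key : Filter.Tendsto auxF (nhdsWithin 0 (Set.Ioi 0)) (nhds 0) := by
      have h1 : Filter.Tendsto (fun u : ℝ => u * Real.log (1 + 1 / u))
          (nhdsWithin 0 (Set.Ioi 0)) (nhds 0) := by
        have hup : Filter.Tendsto (fun u : ℝ => 2 * Real.sqrt u)
            (nhdsWithin 0 (Set.Ioi 0)) (nhds 0) := by
          have hcc : Continuous fun u : ℝ => 2 * Real.sqrt u :=
            continuous_const.mul Real.continuous_sqrt
          have : Filter.Tendsto (fun u : ℝ => 2 * Real.sqrt u) (nhds 0) (nhds 0) := by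
            have := hcc.tendsto 0
            simpa using this
          exact this.mono_left nhdsWithin_le_nhds
        refine tendsto_of_tendsto_of_tendsto_of_le_of_le' tendsto_const_nhds hup ?_ ?_
        · filter_upwards [self_mem_nhdsWithin] with u (hu : 0 < u)
          exact mul_nonneg hu.le (aux_log_nonneg hu)
        · filter_upwards [self_mem_nhdsWithin] with u (hu : 0 < u)
          have h1 : Real.log (1 + 1 / u) ≤ 2 * Real.sqrt (1 / u) :=
            aux_log_le_two_sqrt (by positivity)
          have h2 : u * (2 * Real.sqrt (1 / u)) = 2 * Real.sqrt u := by
            rw [one_div, Real.sqrt_inv]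
            rw [show u * (2 * (Real.sqrt u)⁻¹) = 2 * (u / Real.sqrt u) by ring,
              Real.div_sqrt]
          calc u * Real.log (1 + 1 / u) ≤ u * (2 * Real.sqrt (1 / u)) := by
                exact mul_le_mul_of_nonneg_left h1 hu.le
            _ = 2 * Real.sqrt u := h2
      have h2 : Filter.Tendsto (fun u : ℝ => Real.log (1 + u))
          (nhdsWithin 0 (Set.Ioi 0)) (nhds 0) := by
        have hc : ContinuousAt (fun u : ℝ => Real.log (1 + u)) 0 := by
          have := (Real.continuousAt_log (show (1:ℝ) + 0 ≠ 0 by norm_num)).comp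
            ((continuous_const.add continuous_id).continuousAt (x := (0:ℝ)))
          exact this
        have := hc.tendsto.mono_left (nhdsWithin_le_nhds (s := Set.Ioi (0:ℝ)))
        simpa using this
      unfold auxF; simpa only [add_zero] using h1.add h2
    have h00 : ContinuousWithinAt auxF (Set.Ioi 0) 0 := by
      unfold ContinuousWithinAt
      rw [auxF_zero]; exact key
    have hsub : Set.Icc (0:ℝ) R ⊆ insert 0 (Set.Ioi 0) := by
      intro y hy
      rcases eq_or_lt_of_le hy.1 with h | h
      · exact Or.inl h.symm
      · exact Or.inr h
    rw [← h0]
    exact (((continuousWithinAt_insert_self).2 h00).mono hsub)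
  · exact ((auxF_deriv h0).continuousAt).continuousWithinAt

lemma aux_integral_eq {R : ℝ} (hR : 0 < R) :
    ∫ u in Set.Ioc (0:ℝ) R, Real.log (1 + 1 / u)
      = R * Real.log (1 + 1 / R) + Real.log (1 + R) := by
  have hint : IntervalIntegrable (fun u => Real.log (1 + 1 / u)) volume 0 R :=
    (intervalIntegrable_iff_integrableOn_Ioc_of_le hR.le).2 (aux_int_log hR)
  have h := intervalIntegral.integral_eq_sub_of_hasDeriv_right_of_le hR.le (auxF_cont hR)
    (fun x hx => (auxF_deriv hx.1).hasDerivWithinAt) hint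
  rw [intervalIntegral.integral_of_le hR.le] at h
  rw [h, auxF_zero]
  simp [auxF]

theorem entropy_integral_bound :
    (∀ R : ℝ, 0 < R →
      IntegrableOn (fun u => Real.sqrt (Real.log (1 + 1 / u))) (Set.Ioc 0 R)) ∧
    ∀ R : ℝ, 0 < R → R < 1 →
      (∫ u in Set.Ioc (0:ℝ) R, Real.sqrt (Real.log (1 + 1 / u))) ≤
        R * Real.sqrt (Real.log (1 + 1 / R)) +
          Real.log (1 + R) / Real.sqrt (Real.log (1 + 1 / R)) := by
  constructor
  · exact fun R hR => aux_int_sqrt hR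
  · intro R hR hR1
    set b := Real.log (1 + 1 / R) with hb
    have hbpos : 0 < b := Real.log_pos (by nlinarith [one_div_pos.2 hR])
    set sb := Real.sqrt b with hsbdef
    have hsb : 0 < sb := Real.sqrt_pos.2 hbpos
    have hsb2 : sb ^ 2 = b := Real.sq_sqrt hbpos.le
    have hL : 0 ≤ Real.log (1 + R) := Real.log_nonneg (by linarith)
    have hgint : IntegrableOn
        (fun u => (sb - b / (2 * sb)) + (1 / (2 * sb)) * Real.log (1 + 1 / u))
        (Set.Ioc 0 R) :=
      (integrable_const _).add ((aux_int_log hR).const_mul _)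
    have key : (∫ u in Set.Ioc (0:ℝ) R, Real.sqrt (Real.log (1 + 1 / u))) ≤
        ∫ u in Set.Ioc (0:ℝ) R,
          ((sb - b / (2 * sb)) + (1 / (2 * sb)) * Real.log (1 + 1 / u)) := by
      refine setIntegral_mono_on (aux_int_sqrt hR) hgint measurableSet_Ioc ?_
      intro u hu
      have ha : 0 ≤ Real.log (1 + 1 / u) := aux_log_nonneg hu.1
      set sa := Real.sqrt (Real.log (1 + 1 / u)) with hsadef
      have hsa : 0 ≤ sa := Real.sqrt_nonneg _
      have hsa2 : sa ^ 2 = Real.log (1 + 1 / u) := Real.sq_sqrt ha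
      rw [← hsa2]
      have heq : (sb - b / (2 * sb)) + (1 / (2 * sb)) * sa ^ 2 - sa
          = (sa - sb) ^ 2 / (2 * sb) := by
        rw [← hsb2]; field_simp; ring
      nlinarith [div_nonneg (sq_nonneg (sa - sb)) (by positivity : (0:ℝ) ≤ 2 * sb)]
    have hval : (∫ u in Set.Ioc (0:ℝ) R,
          ((sb - b / (2 * sb)) + (1 / (2 * sb)) * Real.log (1 + 1 / u)))
        = (sb - b / (2 * sb)) * R + (1 / (2 * sb)) * (R * b + Real.log (1 + R)) := by
      rw [integral_add (integrable_const _) ((aux_int_log hR).const_mul _),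
        integral_const_mul, aux_integral_eq hR, ← hb]
      simp [Real.volume_Ioc, ENNReal.toReal_ofReal hR.le, max_eq_left hR.le]
      ring
    have hE : (sb - b / (2 * sb)) * R + (1 / (2 * sb)) * (R * b + Real.log (1 + R))
        = R * sb + Real.log (1 + R) / (2 * sb) := by
      rw [← hsb2]; field_simp; ring
    have hhalf : Real.log (1 + R) / (2 * sb) ≤ Real.log (1 + R) / sb := by
      gcongr
      linarith
    calc (∫ u in Set.Ioc (0:ℝ) R, Real.sqrt (Real.log (1 + 1 / u)))
        ≤ (sb - b / (2 * sb)) * R + (1 / (2 * sb)) * (R * b + Real.log (1 + R)) := by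
          rw [← hval]; exact key
      _ = R * sb + Real.log (1 + R) / (2 * sb) := hE
      _ ≤ R * sb + Real.log (1 + R) / sb := by linarith
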